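/- Let G = (ℤ/Lℤ)² be the torus lattice with spins on edges, and let l₁, l₂ be two paths (1-chains) on the lattice with the same boundary (same pair of endpoints). Then the path operators W_{l₁} = Π_{j∈l₁} Z_j and W_{l₂} = Π_{j∈l₂} Z_j satisfy W_{l₁} W_{l₂} = Π_{p ∈ S} B_p for some set S of plaquettes if and only if the closed loop l₁ + l₂ (symmetric difference) is homologically trivial; in that case W_{l₁}|g⟩ = W_{l₂}|g⟩ for every ground state |g⟩ of the toric code (since B_p|g⟩ = |g⟩). -/

import Mathlib

open scoped symmDiff

noncomputable section

abbrev TVertex (L : ℕ) := Fin L × Fin L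
abbrev TEdge (L : ℕ) := TVertex L × Bool
abbrev TCSpace (L : ℕ) := (TEdge L → Bool) → ℂ

/-- The four edges of the plaquette at vertex `v`. -/
def plaquette (L : ℕ) [NeZero L] (v : TVertex L) : Finset (TEdge L) :=
  {(v, false), (v, true), ((v.1, v.2 + 1), false), ((v.1 + 1, v.2), true)}

/-- The four edges of the star at vertex `v`. -/
def starE (L : ℕ) [NeZero L] (v : TVertex L) : Finset (TEdge L) :=
  {(v, false), (v, true), ((v.1 - 1, v.2), false), ((v.1, v.2 - 1), true)}

/-- The path operator `W_l = Π_{j∈l} Z_j` for a 1-chain `l`. -/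
def Wop (L : ℕ) (l : Finset (TEdge L)) : TCSpace L → TCSpace L :=
  fun ψ σ => (∏ e ∈ l, (if σ e then (-1 : ℂ) else 1)) * ψ σ

/-- The plaquette operator `B_p`. -/
def Bop (L : ℕ) [NeZero L] (v : TVertex L) : TCSpace L → TCSpace L :=
  fun ψ σ => (∏ e ∈ plaquette L v, (if σ e then (-1 : ℂ) else 1)) * ψ σ

/-- The boundary (symmetric difference) of the plaquettes in `S`: the edges
lying in an odd number of plaquettes of `S`. -/
def plaqBoundary (L : ℕ) [NeZero L] (S : Finset (TVertex L)) : Finset (TEdge L) :=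
  Finset.univ.filter fun e => Odd (S.filter fun v => e ∈ plaquette L v).card

/-- The set of endpoints (vertices incident to an odd number of edges) of a 1-chain. -/
def chainBoundary (L : ℕ) [NeZero L] (l : Finset (TEdge L)) : Finset (TVertex L) :=
  Finset.univ.filter fun v => Odd (l.filter fun e => e ∈ starE L v).card

/-- Product of signs is multiplicative over symmetric differences. -/
lemma prodSD {α : Type*} [DecidableEq α] (σ : α → Bool) (A B : Finset α) :
    (∏ e ∈ A, (if σ e then (-1:ℂ) else 1)) * ∏ e ∈ B, (if σ e then (-1:ℂ) else 1)
      = ∏ e ∈ A ∆ B, (if σ e then (-1:ℂ) else 1) := by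
  set f : α → ℂ := fun e => if σ e then (-1:ℂ) else 1 with hf
  have hsq : ∀ e, f e * f e = 1 := by intro e; simp only [hf]; cases σ e <;> simp
  have h1 := Finset.prod_union_inter (s₁ := A) (s₂ := B) (f := f)
  have h2 : (A ∆ B) ∪ (A ∩ B) = A ∪ B := symmDiff_sup_inf A B
  have hd : Disjoint (A ∆ B) (A ∩ B) := disjoint_symmDiff_inf A B
  calc (∏ e ∈ A, f e) * ∏ e ∈ B, f e
      = (∏ e ∈ A ∪ B, f e) * ∏ e ∈ A ∩ B, f e := h1.symm
    _ = ((∏ e ∈ A ∆ B, f e) * ∏ e ∈ A ∩ B, f e) * ∏ e ∈ A ∩ B, f e := by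
        rw [← h2, Finset.prod_union hd]
    _ = (∏ e ∈ A ∆ B, f e) * ((∏ e ∈ A ∩ B, f e) * ∏ e ∈ A ∩ B, f e) := by ring
    _ = ∏ e ∈ A ∆ B, f e := by
        rw [← Finset.prod_mul_distrib, Finset.prod_congr rfl (fun e _ => hsq e),
          Finset.prod_const_one, mul_one]

lemma pb_insert (L : ℕ) [NeZero L] (v : TVertex L) (S : Finset (TVertex L)) (hv : v ∉ S) :
    plaqBoundary L (insert v S) = plaquette L v ∆ plaqBoundary L S := by
  ext e
  simp only [plaqBoundary, Finset.mem_filter, Finset.mem_univ, true_and,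
    Finset.mem_symmDiff, Finset.filter_insert]
  by_cases he : e ∈ plaquette L v
  · have : v ∉ S.filter fun w => e ∈ plaquette L w := by simp [hv]
    rw [if_pos he, Finset.card_insert_of_notMem this]
    simp [he, Nat.odd_add_one, Nat.not_odd_iff_even]
  · rw [if_neg he]
    simp [he]

/-- Product of plaquette sign products equals the sign product over the boundary. -/
lemma prodPB (L : ℕ) [NeZero L] (σ : TEdge L → Bool) (S : Finset (TVertex L)) :
    (∏ v ∈ S, ∏ e ∈ plaquette L v, (if σ e then (-1:ℂ) else 1))
      = ∏ e ∈ plaqBoundary L S, (if σ e then (-1:ℂ) else 1) := by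
  induction S using Finset.induction with
  | empty => simp [plaqBoundary]
  | @insert v S hv ih =>
      rw [Finset.prod_insert hv, ih, prodSD, pb_insert L v S hv]

lemma prodMem {α : Type*} [DecidableEq α] (A : Finset α) (e₀ : α) :
    (∏ e ∈ A, (if (e = e₀ : Bool) then (-1:ℂ) else 1)) = if e₀ ∈ A then -1 else 1 := by
  simp only [decide_eq_true_eq]
  exact Finset.prod_ite_eq' A e₀ (fun _ => -1)

/-- Two path operators with the same endpoints multiply to a product of
plaquette operators iff the loop `l₁ ∆ l₂` is homologically trivial (a boundary
of a set of plaquettes), and in that case they act identically on every ground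
state of the toric code. -/
theorem stmt19 (L : ℕ) [NeZero L] (hL : 2 ≤ L) (l₁ l₂ : Finset (TEdge L))
    (hends : chainBoundary L l₁ = chainBoundary L l₂) :
    ((∃ S : Finset (TVertex L),
        Wop L l₁ ∘ Wop L l₂ = fun ψ σ =>
          (∏ v ∈ S, ∏ e ∈ plaquette L v, (if σ e then (-1 : ℂ) else 1)) * ψ σ) ↔
      ∃ S : Finset (TVertex L), l₁ ∆ l₂ = plaqBoundary L S) ∧
    ((∃ S : Finset (TVertex L), l₁ ∆ l₂ = plaqBoundary L S) →
      ∀ g : TCSpace L, (∀ v : TVertex L, Bop L v g = g) → Wop L l₁ g = Wop L l₂ g) := by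
  constructor
  · constructor
    · rintro ⟨S, hS⟩
      refine ⟨S, ?_⟩
      have key : ∀ σ : TEdge L → Bool,
          (∏ e ∈ l₁ ∆ l₂, (if σ e then (-1:ℂ) else 1))
            = ∏ e ∈ plaqBoundary L S, (if σ e then (-1:ℂ) else 1) := by
        intro σ
        have h := congrFun (congrFun hS (fun _ => (1 : ℂ))) σ
        simp only [Wop, Function.comp, mul_one] at h
        rw [prodSD] at h
        rw [h, prodPB]
      ext e₀
      have h := key (fun e => (e = e₀ : Bool))
      rw [prodMem, prodMem] at h
      by_cases h1 : e₀ ∈ l₁ ∆ l₂ <;> by_cases h2 : e₀ ∈ plaqBoundary L S <;>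
        simp [h1, h2] at h ⊢ <;> norm_num at h
    · rintro ⟨S, hS⟩
      refine ⟨S, ?_⟩
      funext ψ σ
      simp only [Wop, Function.comp]
      rw [← mul_assoc, prodSD, hS, prodPB]
  · rintro ⟨S, hS⟩ g hg
    funext σ
    simp only [Wop]
    set f : TEdge L → ℂ := fun e => if σ e then (-1:ℂ) else 1 with hf
    have hfixall : ∀ T : Finset (TVertex L),
        (∏ v ∈ T, ∏ e ∈ plaquette L v, f e) * g σ = g σ := by
      intro T
      induction T using Finset.induction with
      | empty => simp
      | @insert v T hv ih =>
          rw [Finset.prod_insert hv, mul_assoc, ih]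
          have := congrFun (hg v) σ
          simpa [Bop, hf] using this
    have hfix : (∏ e ∈ plaqBoundary L S, f e) * g σ = g σ := by
      rw [← prodPB]; exact hfixall S
    have h2 : (∏ e ∈ l₂, f e) * (∏ e ∈ l₂, f e) = 1 := by
      rw [prodSD, symmDiff_self]
      simp
    calc (∏ e ∈ l₁, f e) * g σ
        = ((∏ e ∈ l₂, f e) * (∏ e ∈ l₂, f e)) * ((∏ e ∈ l₁, f e) * g σ) := by
          rw [h2, one_mul]
      _ = (∏ e ∈ l₂, f e) * (((∏ e ∈ l₁, f e) * (∏ e ∈ l₂, f e)) * g σ) := by ring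
      _ = (∏ e ∈ l₂, f e) * g σ := by rw [prodSD, hS, hfix]
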